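/- Let G be a bipartite graph with parts V' = {v'_1,...,v'_n} and V'' = {v''_1,...,v''_n} constructed from a graph H on vertices {v_1,...,v_n}, with edges {v'_i v''_i : i ∈ [n]} ∪ {v'_i v''_j, v'_j v''_i : v_i v_j ∈ E(H)}. Then H has an irredundant set of size ℓ if and only if G has an induced matching of size ℓ. -/

import Mathlib

/-- `M` is a matching of `G`. -/
def IsMatching' {V : Type*} (G : SimpleGraph V) (M : Set (Sym2 V)) : Prop :=
  M ⊆ G.edgeSet ∧ ∀ e ∈ M, ∀ f ∈ M, e ≠ f → ∀ v, v ∈ e → v ∉ f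

/-- The set of vertices saturated by `M`. -/
def Vm {V : Type*} (M : Set (Sym2 V)) : Set V := {v | ∃ e ∈ M, v ∈ e}

/-- `M` is an induced matching of `G`. -/
def IsInducedMatching {V : Type*} (G : SimpleGraph V) (M : Set (Sym2 V)) : Prop :=
  IsMatching' G M ∧ ∀ u v, u ∈ Vm M → v ∈ Vm M → G.Adj u v → s(u, v) ∈ M

/-- The closed neighborhood `N[T]` of a vertex set `T` in `H`. -/
def closedNbhd {V : Type*} (H : SimpleGraph V) (T : Set V) : Set V :=
  {x | x ∈ T ∨ ∃ v ∈ T, H.Adj v x}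

/-- `S` is an irredundant set of `H`: for every `v ∈ S`, `N[S \ {v}] ≠ N[S]`. -/
def Irredundant {V : Type*} (H : SimpleGraph V) (S : Set V) : Prop :=
  ∀ v ∈ S, closedNbhd H (S \ {v}) ≠ closedNbhd H S

/-- The bipartite graph `G` on two copies `V'` (`Sum.inl`) and `V''` (`Sum.inr`) of
the vertices of `H`, with edges `v'_i v''_i` for all `i` and `v'_i v''_j, v'_j v''_i`
for every edge `v_i v_j` of `H`. -/
def doubled {V : Type*} (H : SimpleGraph V) : SimpleGraph (V ⊕ V) where
  Adj a b :=
    (∃ i j, a = Sum.inl i ∧ b = Sum.inr j ∧ (i = j ∨ H.Adj i j)) ∨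
    (∃ i j, a = Sum.inr i ∧ b = Sum.inl j ∧ (j = i ∨ H.Adj j i))
  symm := by
    constructor
    rintro a b (⟨i, j, rfl, rfl, hij⟩ | ⟨i, j, rfl, rfl, hij⟩)
    · exact Or.inr ⟨j, i, rfl, rfl, hij⟩
    · exact Or.inl ⟨j, i, rfl, rfl, hij⟩
  loopless := by
    constructor
    rintro a (⟨i, j, h1, h2, _⟩ | ⟨i, j, h1, h2, _⟩) <;> rw [h1] at h2 <;> simp_all

/-- `H` has an irredundant set of size `ℓ` iff the doubled bipartite graph has an
induced matching of size `ℓ`. -/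
theorem stmt15 {V : Type*} [Fintype V] (H : SimpleGraph V) (ℓ : ℕ) :
    (∃ S : Set V, Irredundant H S ∧ S.ncard = ℓ) ↔
    (∃ M : Set (Sym2 (V ⊕ V)), IsInducedMatching (doubled H) M ∧ M.ncard = ℓ) := by
  classical
  constructor
  · rintro ⟨S, hS, hcard⟩
    have key : ∀ v ∈ S, ∃ w, (v = w ∨ H.Adj v w) ∧ w ∉ closedNbhd H (S \ {v}) := by
      intro v hv
      have hne := hS v hv
      have hsub : closedNbhd H (S \ {v}) ⊆ closedNbhd H S := by
        rintro x (hx | ⟨u, hu, hadj⟩)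
        · exact Or.inl hx.1
        · exact Or.inr ⟨u, hu.1, hadj⟩
      obtain ⟨w, hwS, hwP⟩ : ∃ w, w ∈ closedNbhd H S ∧ w ∉ closedNbhd H (S \ {v}) := by
        by_contra h
        push_neg at h
        exact hne (Set.Subset.antisymm hsub (fun x hx => h x hx))
      refine ⟨w, ?_, hwP⟩
      rcases hwS with hw | ⟨u, hu, hadj⟩
      · by_cases hwv : w = v
        · exact Or.inl hwv.symm
        · exact absurd (Or.inl ⟨hw, hwv⟩) hwP
      · by_cases huv : u = v
        · subst huv; exact Or.inr hadj
        · exact absurd (Or.inr ⟨u, ⟨hu, huv⟩, hadj⟩) hwP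
    choose g hg1 hg2 using key
    set f : V → V := fun v => if h : v ∈ S then g v h else v with hf
    have hfN : ∀ v, v ∈ S → (v = f v ∨ H.Adj v (f v)) := by
      intro v h; simp only [hf, dif_pos h]; exact hg1 v h
    have hfP : ∀ v, v ∈ S → f v ∉ closedNbhd H (S \ {v}) := by
      intro v h; simp only [hf, dif_pos h]; exact hg2 v h
    have hpriv : ∀ v ∈ S, ∀ u ∈ S, (u = f v ∨ H.Adj u (f v)) → u = v := by
      intro v hv u hu h
      by_contra hne
      apply hfP v hv
      rcases h with h | h
      · exact Or.inl ⟨h ▸ hu, h ▸ hne⟩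
      · exact Or.inr ⟨u, ⟨hu, hne⟩, h⟩
    refine ⟨(fun v => s(Sum.inl v, Sum.inr (f v))) '' S, ⟨⟨?_, ?_⟩, ?_⟩, ?_⟩
    · rintro e ⟨v, hv, rfl⟩
      rw [SimpleGraph.mem_edgeSet]
      exact Or.inl ⟨v, f v, rfl, rfl, hfN v hv⟩
    · rintro e ⟨v, hv, rfl⟩ e' ⟨v', hv', rfl⟩ hne x hx hx'
      rw [Sym2.mem_iff] at hx hx'
      have hvv : v ≠ v' := by rintro rfl; exact hne rfl
      rcases hx with rfl | rfl <;> rcases hx' with h | h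
      · exact hvv (Sum.inl.inj h)
      · exact absurd h (by simp)
      · exact absurd h (by simp)
      · have hfe : f v = f v' := Sum.inr.inj h
        have := hpriv v hv v' hv' (hfe ▸ hfN v' hv')
        exact hvv this.symm
    · intro u w hu hw hadj
      obtain ⟨e, ⟨a, ha, rfl⟩, hue⟩ := hu
      obtain ⟨e', ⟨b, hb, rfl⟩, hwe⟩ := hw
      rw [Sym2.mem_iff] at hue hwe
      rcases hadj with ⟨i, j, rfl, rfl, hij⟩ | ⟨i, j, rfl, rfl, hij⟩
      · -- u = inl i, w = inr j
        have hia : i = a := by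
          rcases hue with h | h
          · exact Sum.inl.inj h
          · exact absurd h (by simp)
        have hjb : j = f b := by
          rcases hwe with h | h
          · exact absurd h (by simp)
          · exact Sum.inr.inj h
        rw [hjb] at hij ⊢
        rw [hia] at hij ⊢
        have hab : a = b := hpriv b hb a ha hij
        rw [hab]
        exact ⟨b, hb, rfl⟩
      · -- u = inr i, w = inl j
        have hjb : j = b := by
          rcases hwe with h | h
          · exact Sum.inl.inj h
          · exact absurd h (by simp)
        have hia : i = f a := by
          rcases hue with h | h
          · exact absurd h (by simp)
          · exact Sum.inr.inj h
        rw [hia] at hij ⊢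
        rw [hjb] at hij ⊢
        have hab : b = a := hpriv a ha b hb hij
        rw [hab]
        exact ⟨a, ha, Sym2.eq_swap⟩
    · rw [Set.ncard_image_of_injOn, hcard]
      intro v hv v' hv' h
      rw [Sym2.eq_iff] at h
      rcases h with ⟨h1, _⟩ | ⟨h1, _⟩
      · exact Sum.inl.inj h1
      · exact absurd h1 (by simp)
  · rintro ⟨M, ⟨⟨hMe, hMd⟩, hMi⟩, hcard⟩
    have hform : ∀ e ∈ M, ∃ a b, e = s(Sum.inl a, Sum.inr b) ∧ (a = b ∨ H.Adj a b) := by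
      intro e he
      induction e using Sym2.ind with
      | _ x y =>
        have hxy : (doubled H).Adj x y := hMe he
        rcases hxy with ⟨i, j, rfl, rfl, hij⟩ | ⟨i, j, rfl, rfl, hij⟩
        · exact ⟨i, j, rfl, hij⟩
        · exact ⟨j, i, Sym2.eq_swap, hij⟩
    set S : Set V := {a | ∃ b, s(Sum.inl a, Sum.inr b) ∈ M} with hSdef
    have hex : ∀ a : V, a ∈ S → ∃ b, s(Sum.inl a, Sum.inr b) ∈ M := fun a ha => ha
    choose g0 hg0 using hex
    set gg : V → V := fun a => if h : a ∈ S then g0 a h else a with hggdef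
    have hgg : ∀ a ∈ S, s(Sum.inl a, Sum.inr (gg a)) ∈ M := by
      intro a ha; simp only [hggdef, dif_pos ha]; exact hg0 a ha
    have uniqL : ∀ a b b', s(Sum.inl a, Sum.inr b) ∈ M → s(Sum.inl a, Sum.inr b') ∈ M →
        b = b' := by
      intro a b b' h1 h2
      by_contra hne
      have hne' : s(Sum.inl a, Sum.inr b) ≠ s(Sum.inl a, Sum.inr b') := by
        rw [Ne, Sym2.eq_iff]
        rintro (⟨_, h⟩ | ⟨h, _⟩)
        · exact hne (Sum.inr.inj h)
        · exact absurd h (by simp)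
      exact hMd _ h1 _ h2 hne' (Sum.inl a) (Sym2.mem_mk_left _ _) (Sym2.mem_mk_left _ _)
    have uniqR : ∀ a a' b, s(Sum.inl a, Sum.inr b) ∈ M → s(Sum.inl a', Sum.inr b) ∈ M →
        a = a' := by
      intro a a' b h1 h2
      by_contra hne
      have hne' : s(Sum.inl a, Sum.inr b) ≠ s(Sum.inl a', Sum.inr b) := by
        rw [Ne, Sym2.eq_iff]
        rintro (⟨h, _⟩ | ⟨h, _⟩)
        · exact hne (Sum.inl.inj h)
        · exact absurd h (by simp)
      exact hMd _ h1 _ h2 hne' (Sum.inr b) (Sym2.mem_mk_right _ _) (Sym2.mem_mk_right _ _)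
    have hMim : M = (fun a => s(Sum.inl a, Sum.inr (gg a))) '' S := by
      ext e; constructor
      · intro he
        obtain ⟨a, b, rfl, _⟩ := hform e he
        have ha : a ∈ S := ⟨b, he⟩
        refine ⟨a, ha, ?_⟩
        have hb : gg a = b := uniqL a (gg a) b (hgg a ha) he
        show s(Sum.inl a, Sum.inr (gg a)) = s(Sum.inl a, Sum.inr b)
        rw [hb]
      · rintro ⟨a, ha, rfl⟩; exact hgg a ha
    refine ⟨S, ?_, ?_⟩
    · intro v hv hEq
      have hedge : s(Sum.inl v, Sum.inr (gg v)) ∈ M := hgg v hv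
      have hadj : v = gg v ∨ H.Adj v (gg v) := by
        have hA : (doubled H).Adj (Sum.inl v) (Sum.inr (gg v)) := hMe hedge
        rcases hA with ⟨i, j, hi, hj, hij⟩ | ⟨i, j, hi, _, _⟩
        · cases Sum.inl.inj hi; cases Sum.inr.inj hj; exact hij
        · exact absurd hi (by simp)
      have hwS : gg v ∈ closedNbhd H S := by
        rcases hadj with h | h
        · exact Or.inl (h ▸ hv)
        · exact Or.inr ⟨v, hv, h⟩
      rw [← hEq] at hwS
      obtain ⟨u, hu, hune, huw⟩ : ∃ u, u ∈ S ∧ u ≠ v ∧ (u = gg v ∨ H.Adj u (gg v)) := by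
        rcases hwS with ⟨hw1, hw2⟩ | ⟨u, ⟨hu1, hu2⟩, hadj'⟩
        · exact ⟨gg v, hw1, hw2, Or.inl rfl⟩
        · exact ⟨u, hu1, hu2, Or.inr hadj'⟩
      have hul : Sum.inl u ∈ Vm M := ⟨_, hgg u hu, Sym2.mem_mk_left _ _⟩
      have hwr : Sum.inr (gg v) ∈ Vm M := ⟨_, hedge, Sym2.mem_mk_right _ _⟩
      have hadj2 : (doubled H).Adj (Sum.inl u) (Sum.inr (gg v)) :=
        Or.inl ⟨u, gg v, rfl, rfl, huw⟩
      have hmem := hMi _ _ hul hwr hadj2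
      exact hune (uniqR u v (gg v) hmem hedge)
    · rw [← hcard, hMim, Set.ncard_image_of_injOn]
      intro a ha a' ha' h
      rw [Sym2.eq_iff] at h
      rcases h with ⟨h1, _⟩ | ⟨h1, _⟩
      · exact Sum.inl.inj h1
      · exact absurd h1 (by simp)
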